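/- arXiv:2205.03794 — 4 statements merged into one kernel-verified Lean document; each statement's English description precedes it below -/
import Mathlib

section
/- Let Φ be a continuous flow on a topological space X and A ⊆ X an open set. Then the first-out map E_A is at most two-to-one: for every y ∈ ∂A, the preimage E_A⁻¹(y) contains at most two points. -/
/-- The first-out map `E_A` of an open set `A` is at most two-to-one: for each
`y ∈ ∂A`, the set of points in the domain of `E_A` mapped to `y` has at most
two elements. -/
theorem stmt_2 {X : Type*} [TopologicalSpace X] (Φ : ℝ → X → X)
    (hcont : Continuous fun p : ℝ × X => Φ p.1 p.2)
    (hid : ∀ x, Φ 0 x = x)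
    (hgrp : ∀ s t x, Φ (s + t) x = Φ s (Φ t x))
    (A : Set X) (hA : IsOpen A) (y : X) (hy : y ∈ frontier A) :
    {x : X | x ∈ frontier A ∧ {t : ℝ | 0 < t ∧ Φ t x ∉ A}.Nonempty ∧
      Φ (sInf {t : ℝ | 0 < t ∧ Φ t x ∉ A}) x = y}.encard ≤ 2 := by
  set s := {x : X | x ∈ frontier A ∧ {t : ℝ | 0 < t ∧ Φ t x ∉ A}.Nonempty ∧
      Φ (sInf {t : ℝ | 0 < t ∧ Φ t x ∉ A}) x = y} with hs
  set T : X → ℝ := fun x => sInf {t : ℝ | 0 < t ∧ Φ t x ∉ A} with hT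
  have hbdd : ∀ x : X, BddBelow {t : ℝ | 0 < t ∧ Φ t x ∉ A} :=
    fun x => ⟨0, fun t ht => ht.1.le⟩
  have hTnonneg : ∀ x ∈ s, 0 ≤ T x := fun x hx =>
    le_csInf hx.2.1 (fun t ht => ht.1.le)
  have hfr : ∀ z, z ∈ frontier A → z ∉ A := by
    intro z hz
    rw [hA.frontier_eq] at hz
    exact hz.2
  -- any point of s with positive exit time equals any other such point
  have key : ∀ x₁ ∈ s, ∀ x₂ ∈ s, 0 < T x₁ → 0 < T x₂ → T x₂ ≤ T x₁ → x₁ = x₂ := by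
    intro x₁ hx₁ x₂ hx₂ h1 h2 hle
    have hy1 : Φ (T x₁) x₁ = y := hx₁.2.2
    have hy2 : Φ (T x₂) x₂ = y := hx₂.2.2
    rcases lt_or_eq_of_le hle with hlt | heq
    · -- T x₂ < T x₁ : leads to contradiction
      exfalso
      have hmem : T x₁ - T x₂ ∈ {t : ℝ | 0 < t ∧ Φ t x₁ ∉ A} := by
        constructor
        · linarith
        · have : Φ (T x₁ - T x₂) x₁ = x₂ := by
            have e1 : Φ (-(T x₂) + T x₁) x₁ = Φ (-(T x₂)) (Φ (T x₁) x₁) := hgrp _ _ _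
            have e2 : Φ (-(T x₂) + T x₂) x₂ = Φ (-(T x₂)) (Φ (T x₂) x₂) := hgrp _ _ _
            rw [hy1] at e1
            rw [hy2, neg_add_cancel, hid] at e2
            calc Φ (T x₁ - T x₂) x₁ = Φ (-(T x₂) + T x₁) x₁ := by ring_nf
              _ = Φ (-(T x₂)) y := e1
              _ = x₂ := e2.symm
          rw [this]
          exact hfr x₂ hx₂.1
      have := csInf_le (hbdd x₁) hmem
      have : T x₁ ≤ T x₁ - T x₂ := this
      linarith
    · -- equal exit times : x₁ = x₂
      have e1 : Φ (-(T x₁) + T x₁) x₁ = Φ (-(T x₁)) (Φ (T x₁) x₁) := hgrp _ _ _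
      have e2 : Φ (-(T x₂) + T x₂) x₂ = Φ (-(T x₂)) (Φ (T x₂) x₂) := hgrp _ _ _
      rw [hy1, neg_add_cancel, hid] at e1
      rw [hy2, neg_add_cancel, hid] at e2
      rw [e1, e2, heq]
  -- choose the witnesses
  by_cases hpos : ∃ x₀ ∈ s, 0 < T x₀
  · obtain ⟨x₀, hx₀, hx₀pos⟩ := hpos
    have hsub : s ⊆ {y, x₀} := by
      intro z hz
      rcases eq_or_lt_of_le (hTnonneg z hz) with h0 | h0
      · left
        have h' : Φ (T z) z = y := hz.2.2
        rw [← h0, hid] at h'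
        exact h'
      · right
        rcases le_total (T z) (T x₀) with h | h
        · exact (key x₀ hx₀ z hz hx₀pos h0 h).symm
        · exact key z hz x₀ hx₀ h0 hx₀pos h
    calc s.encard ≤ ({y, x₀} : Set X).encard := Set.encard_le_encard hsub
      _ ≤ ({x₀} : Set X).encard + 1 := Set.encard_insert_le _ _
      _ = 2 := by rw [Set.encard_singleton]; rfl
  · have hsub : s ⊆ {y} := by
      intro z hz
      rcases eq_or_lt_of_le (hTnonneg z hz) with h0 | h0
      · have h' : Φ (T z) z = y := hz.2.2
        rw [← h0, hid] at h'
        exact h'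
      · exact absurd ⟨z, hz, h0⟩ hpos
    calc s.encard ≤ ({y} : Set X).encard := Set.encard_le_encard hsub
      _ = 1 := Set.encard_singleton y
      _ ≤ 2 := by norm_num
end

section
/- Let Φ be a flow on X, A ⊆ X an open set, and suppose E_A(x₁) = E_A(x₂) for points x₁ ≠ x₂ in the domain of the first-out map E_A. Then x₁ or x₂ is a fixed point of E_A (i.e., its first exit time is 0). -/
/-- If two distinct points of the domain of the first-out map `E_A` have the
same image, then one of them is a fixed point of `E_A`, i.e. has first exit
time `0`. -/
theorem stmt_3 {X : Type*} [TopologicalSpace X] (Φ : ℝ → X → X)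
    (hcont : Continuous fun p : ℝ × X => Φ p.1 p.2)
    (hid : ∀ x, Φ 0 x = x)
    (hgrp : ∀ s t x, Φ (s + t) x = Φ s (Φ t x))
    (A : Set X) (hA : IsOpen A) (x₁ x₂ : X)
    (hx₁ : x₁ ∈ frontier A) (hx₂ : x₂ ∈ frontier A)
    (hne₁ : {t : ℝ | 0 < t ∧ Φ t x₁ ∉ A}.Nonempty)
    (hne₂ : {t : ℝ | 0 < t ∧ Φ t x₂ ∉ A}.Nonempty)
    (hx : x₁ ≠ x₂)
    (heq : Φ (sInf {t : ℝ | 0 < t ∧ Φ t x₁ ∉ A}) x₁ =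
           Φ (sInf {t : ℝ | 0 < t ∧ Φ t x₂ ∉ A}) x₂) :
    sInf {t : ℝ | 0 < t ∧ Φ t x₁ ∉ A} = 0 ∨
    sInf {t : ℝ | 0 < t ∧ Φ t x₂ ∉ A} = 0 := by
  set S₁ := {t : ℝ | 0 < t ∧ Φ t x₁ ∉ A} with hS₁
  set S₂ := {t : ℝ | 0 < t ∧ Φ t x₂ ∉ A} with hS₂
  set T₁ := sInf S₁ with hT₁
  set T₂ := sInf S₂ with hT₂
  have hb1 : BddBelow S₁ := ⟨0, fun t ht => ht.1.le⟩
  have hb2 : BddBelow S₂ := ⟨0, fun t ht => ht.1.le⟩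
  have h1 : (0:ℝ) ≤ T₁ := le_csInf hne₁ fun t ht => ht.1.le
  have h2 : (0:ℝ) ≤ T₂ := le_csInf hne₂ fun t ht => ht.1.le
  have hA1 : x₁ ∉ A := (hA.frontier_eq ▸ hx₁).2
  have hA2 : x₂ ∉ A := (hA.frontier_eq ▸ hx₂).2
  have e1 : Φ (T₂ - T₁) x₂ = x₁ := by
    have h := congrArg (Φ (-T₁)) heq
    rw [← hgrp, ← hgrp] at h
    simpa [hid, neg_add_eq_sub] using h.symm
  have e2 : Φ (T₁ - T₂) x₁ = x₂ := by
    have h := congrArg (Φ (-T₂)) heq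
    rw [← hgrp, ← hgrp] at h
    simpa [hid, neg_add_eq_sub] using h
  rcases le_total T₁ T₂ with h | h
  · left
    rcases eq_or_lt_of_le h with heq' | hlt
    · have h12 : x₂ = x₁ := by simpa [← heq', hid] using e1
      exact absurd h12.symm hx
    · have hmem : T₂ - T₁ ∈ S₂ := ⟨by linarith, by rw [e1]; exact hA1⟩
      have := csInf_le hb2 hmem
      linarith [this]
  · right
    rcases eq_or_lt_of_le h with heq' | hlt
    · have h12 : x₁ = x₂ := by simpa [heq', hid] using e2
      exact absurd h12 hx
    · have hmem : T₁ - T₂ ∈ S₁ := ⟨by linarith, by rw [e2]; exact hA2⟩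
      have := csInf_le hb1 hmem
      linarith [this]
end

section
/- Let Φ be a flow on X and A ⊆ X an open set. Then A is backward invariant (i.e., Φ(t,x) ∈ A for all x ∈ A and all t ≤ 0) if and only if every point x ∈ ∂A satisfies: E_A(x) = x and R_{Ā}(x) is undefined (equivalently, the forward orbit of x never enters A). -/
/-- An open set `A` is backward invariant if and only if every boundary point
is of type B, i.e. its forward orbit never enters `A` (equivalently, `E_A`
fixes it and `R_Ā` is undefined). -/
theorem stmt_8 {X : Type*} [TopologicalSpace X] (Φ : ℝ → X → X)
    (hcont : Continuous fun p : ℝ × X => Φ p.1 p.2)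
    (hid : ∀ x, Φ 0 x = x)
    (hgrp : ∀ s t x, Φ (s + t) x = Φ s (Φ t x))
    (A : Set X) (hA : IsOpen A) :
    (∀ x ∈ A, ∀ t : ℝ, t ≤ 0 → Φ t x ∈ A) ↔
    (∀ x ∈ frontier A, ∀ t : ℝ, 0 ≤ t → Φ t x ∉ A) := by
  constructor
  · intro hinv x hx t ht hmem
    have hxA : x ∈ A := by
      have := hinv _ hmem (-t) (by linarith)
      rwa [← hgrp, neg_add_cancel, hid] at this
    exact (hA.frontier_eq ▸ hx).2 hxA
  · intro hB x hx t ht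
    by_contra hnot
    have hc : Continuous fun s : ℝ => Φ s x :=
      hcont.comp (continuous_id.prodMk continuous_const)
    set S : Set ℝ := Set.Icc t 0 ∩ (fun s => Φ s x) ⁻¹' Aᶜ with hSdef
    have hSc : IsClosed S := isClosed_Icc.inter (hA.isClosed_compl.preimage hc)
    have htS : t ∈ S := ⟨⟨le_refl t, ht⟩, hnot⟩
    have hbdd : BddAbove S := ⟨0, fun s hs => hs.1.2⟩
    set s₀ := sSup S with hs₀def
    have hs₀S : s₀ ∈ S := hSc.csSup_mem ⟨t, htS⟩ hbdd
    have hs₀le : s₀ ≤ 0 := hs₀S.1.2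
    have hs₀ne : Φ s₀ x ∉ A := hs₀S.2
    have hs₀lt : s₀ < 0 := by
      rcases lt_or_eq_of_le hs₀le with h | h
      · exact h
      · exfalso; apply hs₀ne; rw [h, hid]; exact hx
    have hmid : ∀ s : ℝ, s₀ < s → s ≤ 0 → Φ s x ∈ A := by
      intro s hs1 hs2
      by_contra hsn
      have : s ∈ S := ⟨⟨le_trans hs₀S.1.1 (le_of_lt hs1), hs2⟩, hsn⟩
      exact absurd (le_csSup hbdd this) (not_le.mpr hs1)
    have hcl : Φ s₀ x ∈ closure A := by
      have htend : Filter.Tendsto (fun s => Φ s x) (nhdsWithin s₀ (Set.Ioi s₀))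
          (nhds (Φ s₀ x)) := (hc.tendsto s₀).mono_left nhdsWithin_le_nhds
      apply mem_closure_of_tendsto htend
      filter_upwards [Ioc_mem_nhdsGT_of_mem (Set.mem_Ico.mpr ⟨le_refl s₀, hs₀lt⟩)]
        with s hs
      exact hmid s hs.1 hs.2
    have hfront : Φ s₀ x ∈ frontier A := by
      rw [hA.frontier_eq]; exact ⟨hcl, hs₀ne⟩
    have := hB _ hfront (-s₀) (by linarith)
    rw [← hgrp, neg_add_cancel, hid] at this
    exact this hx
end

section
/- Let Φ be a flow on X and A ⊆ X an open set. If every point x ∈ ∂A satisfies Φ(t,x) ∉ A for all t > 0 (type B), then A is backward invariant: for every x ∉ A and every t > 0, Φ(t,x) ∉ A. -/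
/-- If every boundary point of an open set `A` is of type B (its forward orbit
never enters `A`), then `A` is backward invariant: no point outside `A` ever
flows into `A` in forward time. -/
theorem stmt_9 {X : Type*} [TopologicalSpace X] (Φ : ℝ → X → X)
    (hcont : Continuous fun p : ℝ × X => Φ p.1 p.2)
    (hid : ∀ x, Φ 0 x = x)
    (hgrp : ∀ s t x, Φ (s + t) x = Φ s (Φ t x))
    (A : Set X) (hA : IsOpen A)
    (hB : ∀ x ∈ frontier A, ∀ t : ℝ, 0 < t → Φ t x ∉ A) :
    ∀ x ∉ A, ∀ t : ℝ, 0 < t → Φ t x ∉ A := by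
  intro x hx t ht hmem
  have hfx : Continuous fun s : ℝ => Φ s x :=
    hcont.comp (continuous_id.prodMk continuous_const)
  -- find a crossing time on the frontier
  have key : ∃ s ∈ Set.Icc (0:ℝ) t, Φ s x ∈ frontier A := by
    by_contra h
    push_neg at h
    have hpc := isPreconnected_Icc (a := (0:ℝ)) (b := t)
    have hU : IsOpen ((fun s : ℝ => Φ s x) ⁻¹' A) := hA.preimage hfx
    have hV : IsOpen ((fun s : ℝ => Φ s x) ⁻¹' (closure A)ᶜ) :=
      (isClosed_closure.isOpen_compl).preimage hfx
    have hsub : Set.Icc (0:ℝ) t ⊆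
        ((fun s : ℝ => Φ s x) ⁻¹' A) ∪ ((fun s : ℝ => Φ s x) ⁻¹' (closure A)ᶜ) := by
      intro s hs
      by_cases hc : Φ s x ∈ closure A
      · left
        by_contra hna
        exact h s hs ⟨hc, by rwa [hA.interior_eq]⟩
      · right; exact hc
    have h1 : (Set.Icc (0:ℝ) t ∩ ((fun s : ℝ => Φ s x) ⁻¹' A)).Nonempty :=
      ⟨t, ⟨le_of_lt ht, le_refl t⟩, hmem⟩
    have h2 : (Set.Icc (0:ℝ) t ∩ ((fun s : ℝ => Φ s x) ⁻¹' (closure A)ᶜ)).Nonempty := by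
      refine ⟨0, ⟨le_refl 0, le_of_lt ht⟩, ?_⟩
      intro hc
      have hcx : x ∈ closure A := by simpa [hid] using hc
      refine h 0 ⟨le_refl 0, le_of_lt ht⟩ ?_
      show Φ 0 x ∈ frontier A
      rw [hid]
      exact ⟨hcx, by rwa [hA.interior_eq]⟩
    obtain ⟨s, _, hsA, hsC⟩ := hpc _ _ hU hV hsub h1 h2
    exact hsC (subset_closure hsA)
  obtain ⟨s, ⟨hs0, hst⟩, hsf⟩ := key
  have hsnA : Φ s x ∉ A := by
    intro hin
    exact hsf.2 (by rwa [hA.interior_eq])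
  have hslt : s < t := lt_of_le_of_ne hst (by rintro rfl; exact hsnA hmem)
  have := hB (Φ s x) hsf (t - s) (by linarith)
  apply this
  rw [← hgrp]
  have : t - s + s = t := by ring
  rwa [this]
end
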